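/- arXiv:0710.2258 — 2 statements merged into one kernel-verified Lean document; each statement's English description precedes it below -/
import Mathlib

section
/- (Corollary 2.1(ii),(iii)) Let (X, 𝓧) be a measurable space, Ω a family of probability measures on X, and for i = 1,…,s let ω_i ⊆ Ω be the set of measures under which the null hypothesis H_i is true; assume ∩_{i=1}^s ω_i ≠ ∅. For P ∈ Ω put I(P) = {i : P ∈ ω_i}. Let T_1,…,T_s : X → ℝ be measurable test statistics, fix α ∈ (0,1) and 1 ≤ k ≤ s, and suppose the real constants d_K (for K ⊆ {1,…,s} with |K| ≥ k) satisfy: (a) d_K ≥ q_{1−α}( law under P of k-max(T_i : i ∈ K) ) for every P ∈ ∩_{i∈K} ω_i; and (b) d_K ≥ d_{I(P)} whenever P ∈ Ω has |I(P)| ≥ k and K ⊇ I(P). Then for every P ∈ Ω, the step-down procedure (Algorithm 2.1) with statistics T_i and critical values d_K satisfies P{at least k indices in I(P) are rejected} ≤ α. -/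
open MeasureTheory Filter

/-- The `k`-th largest of the values `y i`, `i ∈ K` (counted with multiplicity). -/
noncomputable def kmax {s : ℕ} (k : ℕ) (K : Finset (Fin s)) (y : Fin s → ℝ) : ℝ :=
  ((K.val.map y).sort (· ≤ ·)).getD (K.card - k) 0

/-- The `β`-quantile of a (probability) measure on `ℝ`:
`q_β(L) = inf {x | L((-∞, x]) ≥ β}`. -/
noncomputable def quantile (μ : Measure ℝ) (β : ℝ) : ℝ :=
  sInf {x : ℝ | ENNReal.ofReal β ≤ μ (Set.Iic x)}

/-- The critical value `d̂_{A_j}` of Algorithm 2.1 at a stage where `R` is the set of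
previously rejected indices: the maximum of `ĉ_{Rᶜ ∪ I'}` over `I' ⊆ R` with `|I'| = k - 1`. -/
noncomputable def dcrit {s : ℕ} (k : ℕ) (c : Finset (Fin s) → ℝ) (R : Finset (Fin s)) : ℝ :=
  sSup {x : ℝ | ∃ I' ⊆ R, I'.card = k - 1 ∧ x = c (Rᶜ ∪ I')}

/-- One step of the step-down procedure (Algorithm 2.1): given the set `R` of indices
rejected so far, returns the set of indices rejected after performing the next step. -/
noncomputable def stepDownNext {s : ℕ} (k : ℕ) (c : Finset (Fin s) → ℝ) (T : Fin s → ℝ)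
    (R : Finset (Fin s)) : Finset (Fin s) :=
  if R = ∅ then Finset.univ.filter (fun i => c Finset.univ < T i)
  else if R.card < k then R
  else R ∪ Rᶜ.filter (fun i => dcrit k c R < T i)

/-- The rejection set of the step-down procedure (Algorithm 2.1) with statistics `T` and
critical values `c`. -/
noncomputable def stepDownRejections {s : ℕ} (k : ℕ) (c : Finset (Fin s) → ℝ)
    (T : Fin s → ℝ) : Finset (Fin s) :=
  (stepDownNext k c T)^[s] ∅


lemma kmax_lt_iff {s k : ℕ} (hk : 1 ≤ k) {K : Finset (Fin s)} (hks : k ≤ K.card)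
    (y : Fin s → ℝ) (c : ℝ) :
    c < kmax k K y ↔ k ≤ (K.filter (fun i => c < y i)).card := by
  classical
  set l := ((K.val.map y).sort (· ≤ ·)) with hl
  have hsort : l.Pairwise (· ≤ ·) := Multiset.pairwise_sort _ _
  have hlen : l.length = K.card := by
    rw [hl, Multiset.length_sort, Multiset.card_map]; rfl
  have hcount : (K.filter (fun i => c < y i)).card
      = l.countP (fun a => decide (c < a)) := by
    have h1 : (K.filter (fun i => c < y i)).card
        = Multiset.countP (fun i => c < y i) K.val := by
      rw [Multiset.countP_eq_card_filter]; rfl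
    have h2 : Multiset.countP (fun a => c < a) (K.val.map y)
        = Multiset.countP (fun i => c < y i) K.val := by
      rw [Multiset.countP_map, Multiset.countP_eq_card_filter]
    have h3 : Multiset.countP (fun a => c < a) (K.val.map y)
        = l.countP (fun a => decide (c < a)) := by
      rw [← Multiset.sort_eq (K.val.map y) (· ≤ ·), ← hl, Multiset.coe_countP]
    rw [h1, ← h2, h3]
  have hm : K.card - k < l.length := by omega
  have hgetD : kmax k K y = l[K.card - k] := by
    rw [kmax, ← hl, List.getD_eq_getElem l 0 hm]
  rw [hgetD, hcount]
  set m := K.card - k with hmdef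
  constructor
  · intro h
    have hdropall : (l.drop m).countP (fun a => decide (c < a)) = (l.drop m).length := by
      rw [List.countP_eq_length]
      intro a ha
      obtain ⟨i, hi, rfl⟩ := List.mem_iff_getElem.1 ha
      rw [List.length_drop] at hi
      have hmi : m + i < l.length := by omega
      rw [List.getElem_drop]
      have hle : l[m] ≤ l[m + i] := by
        have := hsort.rel_get_of_le (a := ⟨m, hm⟩) (b := ⟨m + i, hmi⟩)
          (by simp [Fin.le_def])
        simpa [List.get_eq_getElem] using this
      simpa using lt_of_lt_of_le h hle
    calc k = (l.drop m).length := by rw [List.length_drop]; omega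
    _ = (l.drop m).countP (fun a => decide (c < a)) := hdropall.symm
    _ ≤ (l.take m).countP (fun a => decide (c < a))
          + (l.drop m).countP (fun a => decide (c < a)) := Nat.le_add_left _ _
    _ = l.countP (fun a => decide (c < a)) := by
        rw [← List.countP_append, List.take_append_drop]
  · intro h
    by_contra hc
    push_neg at hc
    have htake0 : (l.take (m+1)).countP (fun a => decide (c < a)) = 0 := by
      rw [List.countP_eq_zero]
      intro a ha
      obtain ⟨i, hi, rfl⟩ := List.mem_iff_getElem.1 ha
      rw [List.length_take] at hi
      have hilen : i < l.length := by omega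
      rw [List.getElem_take]
      have hle : l[i] ≤ l[m] := by
        have := hsort.rel_get_of_le (a := ⟨i, hilen⟩) (b := ⟨m, hm⟩)
          (by simp [Fin.le_def]; omega)
        simpa [List.get_eq_getElem] using this
      simpa using le_trans hle hc
    have : l.countP (fun a => decide (c < a)) ≤ (l.drop (m+1)).length := by
      calc l.countP (fun a => decide (c < a))
          = (l.take (m+1)).countP (fun a => decide (c < a))
            + (l.drop (m+1)).countP (fun a => decide (c < a)) := by
            rw [← List.countP_append, List.take_append_drop]
      _ = (l.drop (m+1)).countP (fun a => decide (c < a)) := by rw [htake0]; omega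
      _ ≤ (l.drop (m+1)).length := List.countP_le_length
    rw [List.length_drop] at this
    omega


lemma stepdown_key {s k : ℕ} (hk1 : 1 ≤ k) (d : Finset (Fin s) → ℝ) (T : Fin s → ℝ)
    (I : Finset (Fin s)) (hIk : k ≤ I.card)
    (hmonoI : ∀ K : Finset (Fin s), I ⊆ K → d I ≤ d K)
    (h : k ≤ ((stepDownRejections k d T) ∩ I).card) :
    k ≤ (I.filter (fun i => d I < T i)).card := by
  classical
  set f := stepDownNext k d T with hf
  have main : ∀ m : ℕ, (∀ i ∈ (f^[m] ∅) ∩ I, d I < T i)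
      ∨ k ≤ (I.filter (fun i => d I < T i)).card := by
    intro m
    induction m with
    | zero => left; intro i hi; simp at hi
    | succ m ih =>
      rcases ih with ih | ih
      · by_cases hcard : k ≤ ((f^[m] ∅) ∩ I).card
        · right
          calc k ≤ ((f^[m] ∅) ∩ I).card := hcard
          _ ≤ (I.filter (fun i => d I < T i)).card := by
              apply Finset.card_le_card
              intro i hi
              simp only [Finset.mem_filter]
              exact ⟨(Finset.mem_inter.1 hi).2, ih i hi⟩
        · left
          set R := f^[m] ∅ with hR
          rw [Function.iterate_succ_apply', ← hR]
          intro i hi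
          rw [Finset.mem_inter] at hi
          obtain ⟨hifR, hiI⟩ := hi
          rw [hf, stepDownNext] at hifR
          by_cases hRe : R = ∅
          · rw [if_pos hRe] at hifR
            rw [Finset.mem_filter] at hifR
            exact lt_of_le_of_lt (hmonoI Finset.univ (Finset.subset_univ I)) hifR.2
          · rw [if_neg hRe] at hifR
            by_cases hRk : R.card < k
            · rw [if_pos hRk] at hifR
              exact ih i (Finset.mem_inter.2 ⟨hifR, hiI⟩)
            · rw [if_neg hRk] at hifR
              rcases Finset.mem_union.1 hifR with hiR | hifil
              · exact ih i (Finset.mem_inter.2 ⟨hiR, hiI⟩)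
              · rw [Finset.mem_filter] at hifil
                -- need d I ≤ dcrit k d R
                have hRIcard : (R ∩ I).card ≤ k - 1 := by omega
                obtain ⟨I', hRII', hI'R, hI'card⟩ :=
                  Finset.exists_subsuperset_card_eq
                    (Finset.inter_subset_left (s₁ := R) (s₂ := I)) hRIcard (by omega)
                have hIsub : I ⊆ Rᶜ ∪ I' := by
                  intro j hj
                  by_cases hjR : j ∈ R
                  · exact Finset.mem_union.2 (Or.inr (hRII' (Finset.mem_inter.2 ⟨hjR, hj⟩)))
                  · exact Finset.mem_union.2 (Or.inl (Finset.mem_compl.2 hjR))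
                have hdd : d I ≤ dcrit k d R := by
                  have hmem : d (Rᶜ ∪ I') ∈
                      {x : ℝ | ∃ I'' ⊆ R, I''.card = k - 1 ∧ x = d (Rᶜ ∪ I'')} :=
                    ⟨I', hI'R, hI'card, rfl⟩
                  have hfin : {x : ℝ | ∃ I'' ⊆ R, I''.card = k - 1 ∧ x = d (Rᶜ ∪ I'')}.Finite := by
                    have : {x : ℝ | ∃ I'' ⊆ R, I''.card = k - 1 ∧ x = d (Rᶜ ∪ I'')}
                        ⊆ (fun I'' => d (Rᶜ ∪ I'')) '' Set.univ := by
                      rintro x ⟨I'', -, -, rfl⟩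
                      exact ⟨I'', trivial, rfl⟩
                    exact Set.Finite.subset (Set.toFinite _) this
                  exact le_trans (hmonoI _ hIsub) (le_csSup hfin.bddAbove hmem)
                exact lt_of_le_of_lt hdd hifil.2
      · right; exact ih
  rcases main s with hmain | hmain
  · calc k ≤ ((stepDownRejections k d T) ∩ I).card := h
    _ ≤ (I.filter (fun i => d I < T i)).card := by
        apply Finset.card_le_card
        intro i hi
        simp only [Finset.mem_filter]
        exact ⟨(Finset.mem_inter.1 hi).2, hmain i hi⟩
  · exact hmain


lemma le_measure_Iic_quantile (μ : Measure ℝ) [IsProbabilityMeasure μ] {β : ℝ} (hβ : β < 1) :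
    ENNReal.ofReal β ≤ μ (Set.Iic (quantile μ β)) := by
  set S := {x : ℝ | ENNReal.ofReal β ≤ μ (Set.Iic x)} with hS
  have hmono : ∀ y ∈ S, ∀ z, y ≤ z → z ∈ S := by
    intro y hy z hyz
    exact le_trans hy (measure_mono (Set.Iic_subset_Iic.2 hyz))
  have hSne : S.Nonempty := by
    have htend := tendsto_measure_Iic_atTop (μ := μ)
    rw [measure_univ] at htend
    have hlt : ENNReal.ofReal β < 1 := ENNReal.ofReal_lt_one.2 hβ
    obtain ⟨x, hx⟩ := (htend.eventually_const_le hlt).exists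
    exact ⟨x, hx⟩
  by_cases hbdd : BddBelow S
  · set q := quantile μ β with hq
    have hstep : ∀ n : ℕ, ENNReal.ofReal β ≤ μ (Set.Iic (q + ((n : ℝ) + 1)⁻¹)) := by
      intro n
      have hlt : sInf S < q + ((n : ℝ) + 1)⁻¹ := by
        have : (0:ℝ) < ((n : ℝ) + 1)⁻¹ := by positivity
        rw [hq, quantile, ← hS]; linarith
      obtain ⟨y, hyS, hyq⟩ := exists_lt_of_csInf_lt hSne hlt
      exact hmono y hyS _ hyq.le
    have hInter : ⋂ n : ℕ, Set.Iic (q + ((n : ℝ) + 1)⁻¹) = Set.Iic q := by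
      ext x
      simp only [Set.mem_iInter, Set.mem_Iic]
      constructor
      · intro h
        refine le_of_forall_pos_le_add fun ε hε => ?_
        obtain ⟨n, hn⟩ := exists_nat_gt ε⁻¹
        have h1 : ((n : ℝ) + 1)⁻¹ ≤ ε := by
          rw [inv_le_comm₀ (by positivity) hε]
          calc ε⁻¹ ≤ n := hn.le
          _ ≤ (n : ℝ) + 1 := by linarith
        linarith [h n]
      · intro h n
        have : (0:ℝ) < ((n : ℝ) + 1)⁻¹ := by positivity
        linarith
    have htend := tendsto_measure_iInter_atTop (μ := μ)
      (s := fun n : ℕ => Set.Iic (q + ((n : ℝ) + 1)⁻¹))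
      (fun n => measurableSet_Iic.nullMeasurableSet)
      (fun n m hnm => Set.Iic_subset_Iic.2 (by
        have : ((m : ℝ) + 1)⁻¹ ≤ ((n : ℝ) + 1)⁻¹ := by
          apply inv_anti₀ (by positivity)
          exact_mod_cast by omega
        linarith))
      ⟨0, measure_ne_top μ _⟩
    rw [hInter] at htend
    exact ge_of_tendsto' htend hstep
  · obtain ⟨y, hyS, hyq⟩ : ∃ y ∈ S, y ≤ quantile μ β := by
      rw [not_bddBelow_iff] at hbdd
      obtain ⟨y, hyS, hyq⟩ := hbdd (quantile μ β)
      exact ⟨y, hyS, hyq.le⟩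
    exact hmono y hyS _ hyq


lemma measurable_kmaxT {X : Type*} [MeasurableSpace X] {s k : ℕ} (hk1 : 1 ≤ k)
    (I : Finset (Fin s)) (hIk : k ≤ I.card)
    (T : Fin s → X → ℝ) (hT : ∀ i, Measurable (T i)) :
    Measurable (fun x => kmax k I (fun i => T i x)) := by
  classical
  apply measurable_of_Ioi
  intro c
  have hset : (fun x => kmax k I (fun i => T i x)) ⁻¹' Set.Ioi c
      = ⋃ S ∈ (I.powersetCard k : Finset (Finset (Fin s))), ⋂ i ∈ S, {x | c < T i x} := by
    ext x
    simp only [Set.mem_preimage, Set.mem_Ioi, Set.mem_iUnion, Set.mem_iInter,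
      Finset.mem_powersetCard, Set.mem_setOf_eq]
    rw [kmax_lt_iff hk1 hIk]
    constructor
    · intro h
      obtain ⟨S, hS, hScard⟩ := Finset.exists_subset_card_eq h
      refine ⟨S, ⟨subset_trans hS (Finset.filter_subset _ _), hScard⟩, fun i hi => ?_⟩
      exact (Finset.mem_filter.1 (hS hi)).2
    · rintro ⟨S, ⟨hSI, hScard⟩, hST⟩
      calc k = S.card := hScard.symm
      _ ≤ (I.filter (fun i => c < T i x)).card := by
          apply Finset.card_le_card
          intro i hi
          exact Finset.mem_filter.2 ⟨hSI hi, hST i hi⟩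
  rw [hset]
  apply Finset.measurableSet_biUnion
  intro S hS
  apply Set.Finite.measurableSet_biInter (Set.toFinite _)
  intro i hi
  exact (hT i) measurableSet_Ioi


open scoped Classical in
/-- The (finite) set `I(P)` of indices of true null hypotheses under `P`. -/
noncomputable def trueSet {X : Type*} [MeasurableSpace X] {s : ℕ}
    (ω : Fin s → Set (Measure X)) (P : Measure X) : Finset (Fin s) :=
  Finset.univ.filter fun i => P ∈ ω i

/-- Corollary 2.1(ii),(iii): the step-down procedure with nonrandom critical
values `d_K` that dominate the `(1-α)`-quantile of the law of `k-max(T_i : i ∈ K)` under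
every `P ∈ ∩_{i∈K} ω_i`, and are monotone above `d_{I(P)}`, controls the `k`-FWER at `α`. -/
theorem stmt3 {X : Type*} [MeasurableSpace X] {s k : ℕ}
    (hs : 1 ≤ s) (hk1 : 1 ≤ k) (hks : k ≤ s)
    (Ωs : Set (Measure X)) (ω : Fin s → Set (Measure X))
    (hsub : ∀ i, ω i ⊆ Ωs)
    (hprob : ∀ P ∈ Ωs, IsProbabilityMeasure P)
    (hne : (⋂ i, ω i).Nonempty)
    (T : Fin s → X → ℝ) (hT : ∀ i, Measurable (T i))
    (α : ℝ) (hα : α ∈ Set.Ioo (0:ℝ) 1)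
    (d : Finset (Fin s) → ℝ)
    (hd : ∀ K : Finset (Fin s), k ≤ K.card → ∀ P : Measure X, (∀ i ∈ K, P ∈ ω i) →
      quantile (Measure.map (fun a => kmax k K (fun i => T i a)) P) (1 - α) ≤ d K)
    (hmono : ∀ P ∈ Ωs, k ≤ (trueSet ω P).card →
      ∀ K : Finset (Fin s), trueSet ω P ⊆ K → d (trueSet ω P) ≤ d K) :
    ∀ P ∈ Ωs,
      P {x | k ≤ ((stepDownRejections k d (fun i => T i x)) ∩ trueSet ω P).card}
        ≤ ENNReal.ofReal α := by
  intro P hP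
  classical
  by_cases hIk : k ≤ (trueSet ω P).card
  · set I := trueSet ω P with hI
    have hprobP : IsProbabilityMeasure P := hprob P hP
    have hmonoI : ∀ K : Finset (Fin s), I ⊆ K → d I ≤ d K := hmono P hP hIk
    set g := fun x => kmax k I (fun i => T i x) with hg
    have hgm : Measurable g := measurable_kmaxT hk1 I hIk T hT
    have hmapP : IsProbabilityMeasure (P.map g) := Measure.isProbabilityMeasure_map hgm.aemeasurable
    have hiI : ∀ i ∈ I, P ∈ ω i := by
      intro i hi
      rw [hI, trueSet, Finset.mem_filter] at hi
      exact hi.2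
    have hqle : quantile (P.map g) (1 - α) ≤ d I := hd I hIk P hiI
    set q := quantile (P.map g) (1 - α) with hqdef
    have hquant : ENNReal.ofReal (1 - α) ≤ (P.map g) (Set.Iic q) :=
      le_measure_Iic_quantile _ (by linarith [hα.1])
    have hsub2 : {x | k ≤ ((stepDownRejections k d (fun i => T i x)) ∩ trueSet ω P).card}
        ⊆ {x | d I < g x} := by
      intro x hx
      have h1 : k ≤ (I.filter (fun i => d I < T i x)).card :=
        stepdown_key hk1 d (fun i => T i x) I hIk hmonoI hx
      exact (kmax_lt_iff hk1 hIk _ _).2 h1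
    calc P {x | k ≤ ((stepDownRejections k d (fun i => T i x)) ∩ trueSet ω P).card}
        ≤ P {x | d I < g x} := measure_mono hsub2
    _ = (P.map g) (Set.Ioi (d I)) := by
        rw [Measure.map_apply hgm measurableSet_Ioi]; rfl
    _ ≤ (P.map g) (Set.Ioi q) := measure_mono (Set.Ioi_subset_Ioi hqle)
    _ = (P.map g) Set.univ - (P.map g) (Set.Iic q) := by
        rw [← Set.compl_Iic, measure_compl measurableSet_Iic (measure_ne_top _ _)]
    _ ≤ 1 - ENNReal.ofReal (1 - α) := by
        rw [measure_univ]
        exact tsub_le_tsub_left hquant 1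
    _ = ENNReal.ofReal α := by
        rw [← ENNReal.ofReal_one, ← ENNReal.ofReal_sub _ (by linarith [hα.2])]
        congr 1
        ring
  · have hempty : {x | k ≤ ((stepDownRejections k d (fun i => T i x)) ∩ trueSet ω P).card}
        = ∅ := by
      ext x
      simp only [Set.mem_setOf_eq, Set.mem_empty_iff_false, iff_false, not_le]
      have h1 : ((stepDownRejections k d (fun i => T i x)) ∩ trueSet ω P).card
          ≤ (trueSet ω P).card :=
        Finset.card_le_card (Finset.inter_subset_right)
      omega
    rw [hempty, measure_empty]
    exact zero_le
end

section
/- (Corollaries 3.1 and 3.2: k-FWER bound for step-down procedures with estimated quantile critical values) Let (Ω, 𝓕, P) be a probability space, 1 ≤ k ≤ s, let I ⊆ {1,…,s} with |I| ≥ k be the set of true hypotheses, let T_1,…,T_s : Ω → ℝ be measurable, and let α ∈ (0,1). Let ω ↦ μ̂(ω) be any map from Ω to probability measures on ℝ^s, and for each K ⊆ {1,…,s} with |K| ≥ k set ĉ_K(ω) := q_{1−α}( law under μ̂(ω) of k-max of the coordinates indexed by K ); assume each map ω ↦ ĉ_K(ω) is measurable. Then the step-down procedure (Algorithm 2.1)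 with statistics T_i(ω) and critical values ĉ_K(ω) satisfies P{at least k indices in I are rejected} ≤ P{k-max(T_i : i ∈ I) > ĉ_I}. -/
open MeasureTheory Filter Topology

noncomputable def inf0 {s : ℕ} (S : Finset (Fin s)) (y : Fin s → ℝ) : ℝ :=
  if h : S.Nonempty then S.inf' h y else 0

open Classical in

lemma count_filter_eq {s : ℕ} (K : Finset (Fin s)) (y : Fin s → ℝ)
    (p : ℝ → Prop) [DecidablePred p] :
    ((K.val.map y).sort (· ≤ ·)).countP (fun x => decide (p x))
      = (K.filter (fun i => p (y i))).card := by
  have h1 : Multiset.countP p (K.val.map y)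
      = ((K.val.map y).sort (· ≤ ·)).countP (fun x => decide (p x)) := by
    conv_lhs => rw [← Multiset.sort_eq (K.val.map y) (· ≤ ·)]
    exact Multiset.coe_countP p _
  rw [← h1, Multiset.countP_map]
  rw [Finset.card_def, Finset.filter_val]

open Classical in

lemma kmax_eq_sup' {s k : ℕ} (hk1 : 1 ≤ k) {K : Finset (Fin s)} (hK : k ≤ K.card)
    (hne : (K.powersetCard k).Nonempty) (y : Fin s → ℝ) :
    kmax k K y = (K.powersetCard k).sup' hne (fun S => inf0 S y) := by
  set l := (K.val.map y).sort (· ≤ ·) with hl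
  have hlen : l.length = K.card := by
    rw [hl, Multiset.length_sort, Multiset.card_map]; rfl
  have hsort : l.Pairwise (· ≤ ·) := Multiset.pairwise_sort _ _
  have hidx : K.card - k < l.length := by omega
  have hkm : kmax k K y = l[K.card - k] := List.getD_eq_getElem l 0 hidx
  set a : ℝ := l[K.card - k] with ha
  have hmono : ∀ (i j : ℕ) (hi : i < l.length) (hj : j < l.length), i ≤ j → l[i] ≤ l[j] := by
    intro i j hi hj hij
    exact hsort.rel_get_of_le (a := ⟨i, hi⟩) (b := ⟨j, hj⟩) hij
  rw [hkm]
  apply le_antisymm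
  · -- a ≤ sup'
    have hcard : k ≤ (K.filter (fun i => a ≤ y i)).card := by
      rw [← count_filter_eq, ← hl]
      have hsub : (l.drop (K.card - k)).Sublist l := List.drop_sublist _ _
      have hd : (l.drop (K.card - k)).countP (fun x => decide (a ≤ x))
          = (l.drop (K.card - k)).length := by
        rw [List.countP_eq_length]
        intro x hx
        obtain ⟨j, hj, hx⟩ := List.mem_iff_getElem.1 hx
        rw [List.getElem_drop] at hx
        simp only [decide_eq_true_eq]
        rw [← hx]
        exact hmono _ _ hidx _ (Nat.le_add_right _ _)
      have := hsub.countP_le (p := fun x => decide (a ≤ x))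
      rw [hd, List.length_drop] at this
      omega
    obtain ⟨S, hS, hScard⟩ := Finset.exists_subset_card_eq hcard
    have hSK : S ∈ K.powersetCard k :=
      Finset.mem_powersetCard.2 ⟨hS.trans (Finset.filter_subset _ _), hScard⟩
    refine le_trans ?_ (Finset.le_sup' (fun S => inf0 S y) hSK)
    have hSne : S.Nonempty := Finset.card_pos.1 (by omega)
    rw [inf0, dif_pos hSne]
    exact Finset.le_inf' _ _ fun i hi => (Finset.mem_filter.1 (hS hi)).2
  · -- sup' ≤ a
    refine Finset.sup'_le _ _ fun S hS => ?_
    obtain ⟨hSK, hScard⟩ := Finset.mem_powersetCard.1 hS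
    have hSne : S.Nonempty := Finset.card_pos.1 (by omega)
    rw [inf0, dif_pos hSne]
    by_contra h
    push_neg at h
    have hall : ∀ i ∈ S, a < y i := fun i hi => (Finset.lt_inf'_iff hSne).1 h i hi
    have hsub2 : S ⊆ K.filter (fun i => a < y i) :=
      fun i hi => Finset.mem_filter.2 ⟨hSK hi, hall i hi⟩
    have hcount : k ≤ (K.filter (fun i => a < y i)).card :=
      hScard ▸ Finset.card_le_card hsub2
    rw [← count_filter_eq, ← hl] at hcount
    -- but countP over l of (a < ·) is at most k - 1
    have hsplit : l = l.take (K.card - k + 1) ++ l.drop (K.card - k + 1) :=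
      (List.take_append_drop _ _).symm
    have htake : (l.take (K.card - k + 1)).countP (fun x => decide (a < x)) = 0 := by
      rw [List.countP_eq_zero]
      intro x hx
      obtain ⟨j, hj, hx⟩ := List.mem_iff_getElem.1 hx
      rw [List.getElem_take] at hx
      simp only [decide_eq_true_eq, not_lt]
      rw [← hx]
      have hj2 : j < K.card - k + 1 := by
        rw [List.length_take] at hj; omega
      have hj' : j < l.length := by omega
      exact hmono j (K.card - k) hj' hidx (by omega)
    have hdrop : (l.drop (K.card - k + 1)).countP (fun x => decide (a < x))
        ≤ k - 1 := by
      have := List.countP_le_length (l := l.drop (K.card - k + 1))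
          (p := fun x => decide (a < x))
      rw [List.length_drop] at this
      omega
    rw [hsplit, List.countP_append, htake] at hcount
    omega

lemma measurable_inf0 {s : ℕ} (S : Finset (Fin s)) :
    Measurable (fun y : Fin s → ℝ => inf0 S y) := by
  unfold inf0
  by_cases h : S.Nonempty
  · simp only [dif_pos h]
    have : (fun y : Fin s → ℝ => S.inf' h y)
        = S.inf' h (fun i => (fun y : Fin s → ℝ => y i)) :=
      funext fun y => (Finset.inf'_apply h (fun i (y : Fin s → ℝ) => y i) y).symm
    rw [this]
    exact Finset.inf'_induction h _ (fun f hf g hg => hf.inf hg)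
      (fun i _ => measurable_pi_apply i)
  · simp only [dif_neg h]
    exact measurable_const

lemma measurable_kmax {s k : ℕ} (hk1 : 1 ≤ k) {K : Finset (Fin s)} (hK : k ≤ K.card) :
    Measurable (fun y : Fin s → ℝ => kmax k K y) := by
  have hne : (K.powersetCard k).Nonempty := Finset.powersetCard_nonempty.2 hK
  have : (fun y : Fin s → ℝ => kmax k K y)
      = fun y => (K.powersetCard k).sup' hne (fun S => inf0 S y) :=
    funext fun y => kmax_eq_sup' hk1 hK hne y
  rw [this]
  have : (fun y : Fin s → ℝ => (K.powersetCard k).sup' hne (fun S => inf0 S y))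
      = (K.powersetCard k).sup' hne (fun S => fun y => inf0 S y) :=
    funext fun y => (Finset.sup'_apply hne (fun S (y : Fin s → ℝ) => inf0 S y) y).symm
  rw [this]
  exact Finset.measurable_sup' hne (fun S _ => measurable_inf0 S)

lemma kmax_mono {s k : ℕ} (hk1 : 1 ≤ k) {I K : Finset (Fin s)} (hI : k ≤ I.card)
    (hIK : I ⊆ K) (y : Fin s → ℝ) : kmax k I y ≤ kmax k K y := by
  have hK : k ≤ K.card := hI.trans (Finset.card_le_card hIK)
  have hneI : (I.powersetCard k).Nonempty := Finset.powersetCard_nonempty.2 hI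
  have hneK : (K.powersetCard k).Nonempty := Finset.powersetCard_nonempty.2 hK
  rw [kmax_eq_sup' hk1 hI hneI, kmax_eq_sup' hk1 hK hneK]
  refine Finset.sup'_le _ _ fun S hS => ?_
  obtain ⟨hSI, hScard⟩ := Finset.mem_powersetCard.1 hS
  exact Finset.le_sup' (fun S => inf0 S y) (Finset.mem_powersetCard.2 ⟨hSI.trans hIK, hScard⟩)

lemma lt_kmax_of_many {s k : ℕ} (hk1 : 1 ≤ k) {I : Finset (Fin s)} (hI : k ≤ I.card)
    {S : Finset (Fin s)} (hSI : S ⊆ I) (hScard : S.card = k) {c : ℝ} (y : Fin s → ℝ)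
    (h : ∀ i ∈ S, c < y i) : c < kmax k I y := by
  have hne : (I.powersetCard k).Nonempty := Finset.powersetCard_nonempty.2 hI
  rw [kmax_eq_sup' hk1 hI hne]
  have hSmem : S ∈ I.powersetCard k := Finset.mem_powersetCard.2 ⟨hSI, hScard⟩
  refine lt_of_lt_of_le ?_ (Finset.le_sup' (fun S => inf0 S y) hSmem)
  have hSne : S.Nonempty := Finset.card_pos.1 (by omega)
  rw [inf0, dif_pos hSne]
  exact (Finset.lt_inf'_iff hSne).2 h

lemma quantile_map_mono {δ : Type*} [MeasurableSpace δ] {μ : Measure δ}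
    [IsProbabilityMeasure μ] {f g : δ → ℝ} (hf : Measurable f) (hg : Measurable g)
    (hfg : ∀ y, f y ≤ g y) {β : ℝ} (hβ0 : 0 < β) (hβ1 : β < 1) :
    quantile (μ.map f) β ≤ quantile (μ.map g) β := by
  unfold quantile
  have hmapf : ∀ x : ℝ, μ.map f (Set.Iic x) = μ (f ⁻¹' Set.Iic x) := fun x =>
    Measure.map_apply hf measurableSet_Iic
  have hmapg : ∀ x : ℝ, μ.map g (Set.Iic x) = μ (g ⁻¹' Set.Iic x) := fun x =>
    Measure.map_apply hg measurableSet_Iic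
  have hsub : {x : ℝ | ENNReal.ofReal β ≤ μ.map g (Set.Iic x)}
      ⊆ {x : ℝ | ENNReal.ofReal β ≤ μ.map f (Set.Iic x)} := by
    intro x hx
    simp only [Set.mem_setOf_eq, hmapf, hmapg] at *
    refine hx.trans (measure_mono fun y hy => ?_)
    exact le_trans (hfg y) hy
  -- nonempty
  have hgne : {x : ℝ | ENNReal.ofReal β ≤ μ.map g (Set.Iic x)}.Nonempty := by
    have hmono : Monotone (fun n : ℕ => g ⁻¹' Set.Iic (n : ℝ)) := fun m n hmn =>
      Set.preimage_mono (Set.Iic_subset_Iic.2 (by exact_mod_cast hmn))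
    have hunion : (⋃ n : ℕ, g ⁻¹' Set.Iic (n : ℝ)) = Set.univ := by
      ext y
      simp only [Set.mem_iUnion, Set.mem_preimage, Set.mem_Iic, Set.mem_univ, iff_true]
      exact exists_nat_ge (g y)
    have htend := tendsto_measure_iUnion_atTop (μ := μ) hmono
    rw [hunion, measure_univ] at htend
    have hlt : ENNReal.ofReal β < 1 := by
      rw [← ENNReal.ofReal_one]
      exact ENNReal.ofReal_lt_ofReal_iff_of_nonneg hβ0.le |>.2 hβ1
    obtain ⟨n, hn⟩ := (htend.eventually (eventually_ge_nhds hlt)).exists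
    exact ⟨(n : ℝ), by simpa [hmapg] using hn⟩
  -- bddBelow
  have hfbdd : BddBelow {x : ℝ | ENNReal.ofReal β ≤ μ.map f (Set.Iic x)} := by
    have hanti : Antitone (fun n : ℕ => f ⁻¹' Set.Iic (-(n : ℝ))) := fun m n hmn =>
      Set.preimage_mono (Set.Iic_subset_Iic.2 (by exact_mod_cast neg_le_neg (by exact_mod_cast hmn)))
    have hinter : (⋂ n : ℕ, f ⁻¹' Set.Iic (-(n : ℝ))) = ∅ := by
      ext y
      simp only [Set.mem_iInter, Set.mem_preimage, Set.mem_Iic, Set.mem_empty_iff_false,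
        iff_false, not_forall, not_le]
      obtain ⟨n, hn⟩ := exists_nat_gt (-f y)
      exact ⟨n, by linarith⟩
    have htend := tendsto_measure_iInter_atTop (μ := μ)
      (fun n => (hf measurableSet_Iic).nullMeasurableSet) hanti ⟨0, measure_ne_top _ _⟩
    rw [hinter, measure_empty] at htend
    have hpos : (0 : ENNReal) < ENNReal.ofReal β := ENNReal.ofReal_pos.2 hβ0
    obtain ⟨n, hn⟩ := (htend.eventually (eventually_lt_nhds hpos)).exists
    refine ⟨-(n : ℝ), fun x hx => ?_⟩
    simp only [Set.mem_setOf_eq, hmapf] at hx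
    by_contra hc
    push_neg at hc
    have : μ (f ⁻¹' Set.Iic x) ≤ μ (f ⁻¹' Set.Iic (-(n : ℝ))) :=
      measure_mono (Set.preimage_mono (Set.Iic_subset_Iic.2 hc.le))
    exact absurd (hx.trans this) (not_le.2 hn)
  exact csInf_le_csInf hfbdd hgne hsub

lemma le_dcrit {s k : ℕ} (c : Finset (Fin s) → ℝ) {R I' : Finset (Fin s)}
    (hI'R : I' ⊆ R) (hI'card : I'.card = k - 1) : c (Rᶜ ∪ I') ≤ dcrit k c R := by
  classical
  have hset : {x : ℝ | ∃ I'' ⊆ R, I''.card = k - 1 ∧ x = c (Rᶜ ∪ I'')}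
      = ↑((R.powersetCard (k - 1)).image (fun J => c (Rᶜ ∪ J))) := by
    ext x
    simp only [Set.mem_setOf_eq, Finset.coe_image, Set.mem_image, Finset.mem_coe,
      Finset.mem_powersetCard]
    constructor
    · rintro ⟨J, hJ, hJc, rfl⟩
      exact ⟨J, ⟨hJ, hJc⟩, rfl⟩
    · rintro ⟨J, ⟨hJ, hJc⟩, rfl⟩
      exact ⟨J, hJ, hJc, rfl⟩
  rw [dcrit, hset]
  apply le_csSup (Finset.bddAbove _)
  simp only [Finset.coe_image, Set.mem_image, Finset.mem_coe, Finset.mem_powersetCard]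
  exact ⟨I', ⟨hI'R, hI'card⟩, rfl⟩

lemma stepdown_main {s k : ℕ} (hk1 : 1 ≤ k) {I : Finset (Fin s)} (hI : k ≤ I.card)
    (c : Finset (Fin s) → ℝ) (T : Fin s → ℝ)
    (hmono : ∀ K : Finset (Fin s), I ⊆ K → c I ≤ c K)
    (h : k ≤ ((stepDownRejections k c T) ∩ I).card) : c I < kmax k I T := by
  classical
  -- invariant
  have key : ∀ j : ℕ,
      ((((stepDownNext k c T)^[j] ∅) ∩ I).card < k ∧
        ∀ i ∈ ((stepDownNext k c T)^[j] ∅) ∩ I, c I < T i) ∨ c I < kmax k I T := by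
    intro j
    induction j with
    | zero => left; simp [hk1]; omega
    | succ j ih =>
      rcases ih with ⟨hcard, hall⟩ | hdone
      · set R := (stepDownNext k c T)^[j] ∅ with hR
        rw [Function.iterate_succ_apply', ← hR]
        -- analyze stepDownNext k c T R
        have hstep : ∀ i ∈ (stepDownNext k c T R) ∩ I, c I < T i := by
          intro i hi
          rw [Finset.mem_inter] at hi
          obtain ⟨hiR, hiI⟩ := hi
          unfold stepDownNext at hiR
          by_cases hRe : R = ∅
          · rw [if_pos hRe] at hiR
            have := (Finset.mem_filter.1 hiR).2
            exact lt_of_le_of_lt (hmono Finset.univ (Finset.subset_univ I)) this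
          · rw [if_neg hRe] at hiR
            by_cases hRc : R.card < k
            · rw [if_pos hRc] at hiR
              exact hall i (Finset.mem_inter.2 ⟨hiR, hiI⟩)
            · rw [if_neg hRc] at hiR
              rcases Finset.mem_union.1 hiR with hiR' | hiR'
              · exact hall i (Finset.mem_inter.2 ⟨hiR', hiI⟩)
              · have hTi := (Finset.mem_filter.1 hiR').2
                -- choose I' with R ∩ I ⊆ I' ⊆ R, card k - 1
                have h1 : (R ∩ I).card ≤ k - 1 := by omega
                have h2 : k - 1 ≤ R.card := by omega
                obtain ⟨I', hI'sub, hI'R, hI'card⟩ :=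
                  Finset.exists_subsuperset_card_eq (n := k - 1)
                    (Finset.inter_subset_left (s₂ := I)) h1 h2
                have hIsub : I ⊆ Rᶜ ∪ I' := by
                  intro a haI
                  by_cases haR : a ∈ R
                  · exact Finset.mem_union.2 (Or.inr (hI'sub (Finset.mem_inter.2 ⟨haR, haI⟩)))
                  · exact Finset.mem_union.2 (Or.inl (Finset.mem_compl.2 haR))
                calc c I ≤ c (Rᶜ ∪ I') := hmono _ hIsub
                  _ ≤ dcrit k c R := le_dcrit c hI'R hI'card
                  _ < T i := hTi
        by_cases hnc : ((stepDownNext k c T R) ∩ I).card < k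
        · exact Or.inl ⟨hnc, hstep⟩
        · right
          push_neg at hnc
          obtain ⟨S, hS, hScard⟩ := Finset.exists_subset_card_eq hnc
          exact lt_kmax_of_many hk1 hI (hS.trans (Finset.inter_subset_right)) hScard T
            (fun i hi => hstep i (hS hi))
      · exact Or.inr hdone
  rcases key s with ⟨hcard, _⟩ | hdone
  · exact absurd h (by rw [stepDownRejections] at h ⊢; omega)
  · exact hdone

/-- Corollaries 3.1 and 3.2: for the step-down procedure whose critical values
`ĉ_K(ω)` are the `(1-α)`-quantiles of the law of the `k`-max of the `K`-coordinates under an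
estimated distribution `μ̂(ω)` on `ℝ^s`, the probability of rejecting at least `k` indices in
`I` is at most `P{k-max(T_i : i ∈ I) > ĉ_I}`. -/
theorem stmt9 {Ω : Type*} [MeasurableSpace Ω] (P : Measure Ω) [IsProbabilityMeasure P]
    {s k : ℕ} (hs : 1 ≤ s) (hk1 : 1 ≤ k) (hks : k ≤ s)
    (I : Finset (Fin s)) (hI : k ≤ I.card)
    (T : Fin s → Ω → ℝ) (hT : ∀ i, Measurable (T i))
    (α : ℝ) (hα : α ∈ Set.Ioo (0:ℝ) 1)
    (μhat : Ω → Measure (Fin s → ℝ)) (hμ : ∀ ω : Ω, IsProbabilityMeasure (μhat ω))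
    (hmeas : ∀ K : Finset (Fin s), Measurable (fun ω : Ω =>
      quantile (Measure.map (fun y => kmax k K y) (μhat ω)) (1 - α))) :
    P {ω | k ≤ ((stepDownRejections k
          (fun K => quantile (Measure.map (fun y => kmax k K y) (μhat ω)) (1 - α))
          (fun i => T i ω)) ∩ I).card}
      ≤ P {ω | quantile (Measure.map (fun y => kmax k I y) (μhat ω)) (1 - α)
          < kmax k I (fun i => T i ω)} := by
  have hβ0 : 0 < 1 - α := by linarith [hα.2]
  have hβ1 : 1 - α < 1 := by linarith [hα.1]
  apply measure_mono
  intro ω hω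
  simp only [Set.mem_setOf_eq] at hω ⊢
  haveI := hμ ω
  refine stepdown_main hk1 hI _ _ ?_ hω
  intro K hIK
  have hK : k ≤ K.card := hI.trans (Finset.card_le_card hIK)
  exact quantile_map_mono (measurable_kmax hk1 hI) (measurable_kmax hk1 hK)
    (fun y => kmax_mono hk1 hI hIK y) hβ0 hβ1
end
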